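/- Let Θ be a compact subset of ℝ⁴ such that every θ = (α, β, γ, δ) ∈ Θ satisfies β > 0, β < 1 and δ ≥ |γ|, and let X be a real random variable with 𝔼[log⁺|X|] < ∞. Define Λ(θ) = max{β, 2^{−1}(γX + δ|X|)·exp(−2^{−1}α/(1−β)) − β}. Then 𝔼[sup_{θ∈Θ} |log Λ(θ)|] < ∞. -/

import Mathlib

open MeasureTheory

/-- Sup over a compact space equals sup over a dense subset, for continuous real functions. -/
lemma ciSup_dense_eq {K : Type*} [TopologicalSpace K] [CompactSpace K] [Nonempty K]
    {D : Set K} (hDd : Dense D) {g : K → ℝ} (hg : Continuous g) :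
    (⨆ x : K, g x) = ⨆ d : D, g d := by
  have hDne : D.Nonempty := hDd.nonempty
  haveI : Nonempty D := hDne.to_subtype
  obtain ⟨x₀, -, hx₀⟩ := isCompact_univ.exists_isMaxOn Set.univ_nonempty hg.continuousOn
  have hmax : ∀ y : K, g y ≤ g x₀ := fun y => hx₀ (Set.mem_univ y)
  have hbddK : BddAbove (Set.range g) := ⟨g x₀, by rintro _ ⟨y, rfl⟩; exact hmax y⟩
  have hbddD : BddAbove (Set.range fun d : D => g d) :=
    ⟨g x₀, by rintro _ ⟨d, rfl⟩; exact hmax d⟩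
  refine le_antisymm ?_ (ciSup_le fun d => le_ciSup hbddK (d : K))
  refine ciSup_le fun y => ?_
  refine le_of_forall_sub_le fun ε hε => ?_
  have hU : IsOpen {z : K | g y - ε < g z} := isOpen_lt continuous_const hg
  obtain ⟨d, hdD, hdU⟩ := hDd.exists_mem_open hU ⟨y, by simp [hε]⟩
  calc g y - ε ≤ g d := le_of_lt hdU
    _ ≤ ⨆ d : D, g d := le_ciSup hbddD ⟨d, hdD⟩

/-- Uniform integrability over a compact parameter set `Θ ⊆ ℝ⁴` (with `0 < β < 1` and
`δ ≥ |γ|` on `Θ`) of the logarithm of the Lipschitz coefficient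
`Λ(θ) = max{β, 2⁻¹(γX + δ|X|)exp(-2⁻¹α/(1-β)) - β}` of the inverted EGARCH(1,1) map,
under `𝔼[log⁺|X|] < ∞`: one has `𝔼[sup_{θ∈Θ} |log Λ(θ)|] < ∞`. -/
theorem uniform_log_moment_lipschitz_coefficient
    {Ω : Type*} [MeasurableSpace Ω] (μ : Measure Ω) [IsProbabilityMeasure μ]
    (Θ : Set (ℝ × ℝ × ℝ × ℝ)) (hΘc : IsCompact Θ)
    (hΘ : ∀ θ ∈ Θ, 0 < θ.2.1 ∧ θ.2.1 < 1 ∧ |θ.2.2.1| ≤ θ.2.2.2)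
    (X : Ω → ℝ) (hXmeas : Measurable X)
    (hlog : Integrable (fun ω => max (Real.log |X ω|) 0) μ) :
    Integrable (fun ω => ⨆ θ : Θ, |Real.log (max θ.1.2.1
      (2⁻¹ * (θ.1.2.2.1 * X ω + θ.1.2.2.2 * |X ω|) *
        Real.exp (-2⁻¹ * θ.1.1 / (1 - θ.1.2.1)) - θ.1.2.1))|) μ := by
  classical
  rcases Θ.eq_empty_or_nonempty with rfl | hne
  · simp only [Real.iSup_of_isEmpty]
    exact integrable_const 0
  -- The Lipschitz coefficient as a function of the parameter and the innovation
  set Lam : (ℝ × ℝ × ℝ × ℝ) → ℝ → ℝ := fun θ x => max θ.2.1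
    (2⁻¹ * (θ.2.2.1 * x + θ.2.2.2 * |x|) * Real.exp (-2⁻¹ * θ.1 / (1 - θ.2.1)) - θ.2.1)
    with hLam
  -- lower bound on β over Θ
  have hβcont : Continuous (fun θ : ℝ × ℝ × ℝ × ℝ => θ.2.1) :=
    continuous_fst.comp continuous_snd
  obtain ⟨θb, hθbΘ, hθbmin⟩ := hΘc.exists_isMinOn hne hβcont.continuousOn
  set b : ℝ := θb.2.1 with hbdef
  have hb : 0 < b := (hΘ θb hθbΘ).1
  have hble : ∀ θ ∈ Θ, b ≤ θ.2.1 := fun θ hθm => hθbmin hθm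
  -- upper bound on β over Θ
  obtain ⟨θM, hθMΘ, hθMmax⟩ := hΘc.exists_isMaxOn hne hβcont.continuousOn
  set β₁ : ℝ := θM.2.1 with hβ₁def
  have hβ₁lt : β₁ < 1 := (hΘ θM hθMΘ).2.1
  have hβle : ∀ θ ∈ Θ, θ.2.1 ≤ β₁ := fun θ hθm => hθMmax hθm
  -- norm bound over Θ
  obtain ⟨R, hRball⟩ := hΘc.isBounded.subset_closedBall 0
  have hR : ∀ θ ∈ Θ, ‖θ‖ ≤ R := fun θ hθm => by
    simpa [Metric.mem_closedBall, dist_zero_right] using hRball hθm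
  have hcoord : ∀ θ ∈ Θ, |θ.1| ≤ R ∧ |θ.2.1| ≤ R ∧ |θ.2.2.1| ≤ R ∧ |θ.2.2.2| ≤ R := by
    intro θ hθm
    have h1 : ‖θ.1‖ ≤ ‖θ‖ := norm_fst_le θ
    have h2 : ‖θ.2‖ ≤ ‖θ‖ := norm_snd_le θ
    have h21 : ‖θ.2.1‖ ≤ ‖θ.2‖ := norm_fst_le θ.2
    have h22 : ‖θ.2.2‖ ≤ ‖θ.2‖ := norm_snd_le θ.2
    have h221 : ‖θ.2.2.1‖ ≤ ‖θ.2.2‖ := norm_fst_le θ.2.2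
    have h222 : ‖θ.2.2.2‖ ≤ ‖θ.2.2‖ := norm_snd_le θ.2.2
    have hRθ := hR θ hθm
    simp only [Real.norm_eq_abs] at *
    exact ⟨by linarith, by linarith, by linarith, by linarith⟩
  have hRpos : 0 < R := by
    have := (hcoord θb hθbΘ).2.1
    have : b ≤ |θb.2.1| := le_abs_self _
    linarith [(hcoord θb hθbΘ).2.1]
  -- bound on the exponential factor
  set E : ℝ := Real.exp (2⁻¹ * R / (1 - β₁)) with hEdef
  have hβ₁sub : 0 < 1 - β₁ := by linarith
  have hE1 : 1 ≤ E := Real.one_le_exp (div_nonneg (by linarith) hβ₁sub.le)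
  have hEexp : ∀ θ ∈ Θ, Real.exp (-2⁻¹ * θ.1 / (1 - θ.2.1)) ≤ E := by
    intro θ hθm
    apply Real.exp_le_exp.mpr
    have hβθ : 0 < 1 - θ.2.1 := by linarith [(hΘ θ hθm).2.1]
    have hβθ' : 1 - β₁ ≤ 1 - θ.2.1 := by linarith [hβle θ hθm]
    have hα : |θ.1| ≤ R := (hcoord θ hθm).1
    have hnum : -2⁻¹ * θ.1 ≤ 2⁻¹ * R := by
      have := neg_abs_le θ.1
      linarith
    exact div_le_div₀ (by linarith) hnum hβ₁sub hβθ'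
  set C : ℝ := R * E with hCdef
  have hC : 0 < C := by positivity
  -- pointwise two-sided bound on Lam
  have hLamLB : ∀ θ ∈ Θ, ∀ x : ℝ, b ≤ Lam θ x := fun θ hθm x =>
    le_max_of_le_left (hble θ hθm)
  have hLamUB : ∀ θ ∈ Θ, ∀ x : ℝ, Lam θ x ≤ C * (1 + |x|) := by
    intro θ hθm x
    obtain ⟨hα, hβR, hγR, hδR⟩ := hcoord θ hθm
    have hexp_pos : 0 < Real.exp (-2⁻¹ * θ.1 / (1 - θ.2.1)) := Real.exp_pos _
    have hexpE := hEexp θ hθm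
    have hx0 : (0:ℝ) ≤ |x| := abs_nonneg x
    set s : ℝ := θ.2.2.1 * x + θ.2.2.2 * |x| with hs
    have h1 : |s| ≤ 2 * R * |x| := by
      rw [hs]
      refine (abs_add_le _ _).trans ?_
      rw [abs_mul, abs_mul, abs_abs]
      nlinarith
    have ha : 2⁻¹ * s ≤ R * |x| := by
      have := le_abs_self s
      linarith
    have h2 : 2⁻¹ * s * Real.exp (-2⁻¹ * θ.1 / (1 - θ.2.1)) ≤ R * |x| * E := by
      calc 2⁻¹ * s * Real.exp (-2⁻¹ * θ.1 / (1 - θ.2.1))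
          ≤ R * |x| * Real.exp (-2⁻¹ * θ.1 / (1 - θ.2.1)) :=
            mul_le_mul_of_nonneg_right ha hexp_pos.le
      _ ≤ R * |x| * E := mul_le_mul_of_nonneg_left hexpE (by positivity)
    have hCeq : C * (1 + |x|) = C + C * |x| := by ring
    have hRC : R ≤ C := by
      rw [hCdef]
      nlinarith
    have hRE : R * |x| * E = C * |x| := by rw [hCdef]; ring
    apply max_le
    · have hβR' : θ.2.1 ≤ R := (le_abs_self _).trans hβR
      have hCx : 0 ≤ C * |x| := by positivity
      linarith
    · have hβpos := (hΘ θ hθm).1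
      rw [hCeq]
      linarith [h2, hRE.le]
  -- pointwise bound on |log Lam|
  set K : ℝ := |Real.log b| + |Real.log C| + Real.log 2 with hKdef
  have hlog2 : (0:ℝ) ≤ Real.log 2 := Real.log_nonneg (by norm_num)
  have hlogmax : ∀ x : ℝ, Real.log (max |x| 1) = max (Real.log |x|) 0 := by
    intro x
    rcases le_total |x| 1 with h | h
    · rw [max_eq_right h, Real.log_one, max_eq_right (Real.log_nonpos (abs_nonneg x) h)]
    · rw [max_eq_left h, max_eq_left (Real.log_nonneg h)]
  have hkey : ∀ θ ∈ Θ, ∀ x : ℝ, |Real.log (Lam θ x)| ≤ K + max (Real.log |x|) 0 := by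
    intro θ hθm x
    have hL : 0 < Lam θ x := lt_of_lt_of_le hb (hLamLB θ hθm x)
    have hlow : Real.log b ≤ Real.log (Lam θ x) := Real.log_le_log hb (hLamLB θ hθm x)
    have hup : Real.log (Lam θ x) ≤ Real.log C + Real.log (1 + |x|) := by
      rw [← Real.log_mul hC.ne' (by positivity)]
      exact Real.log_le_log hL (hLamUB θ hθm x)
    have h1x : Real.log (1 + |x|) ≤ Real.log 2 + max (Real.log |x|) 0 := by
      have h2 : (1:ℝ) + |x| ≤ 2 * max |x| 1 := by
        rcases le_total |x| 1 with h | h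
        · rw [max_eq_right h]; linarith
        · rw [max_eq_left h]; linarith
      calc Real.log (1 + |x|) ≤ Real.log (2 * max |x| 1) :=
            Real.log_le_log (by positivity) h2
      _ = Real.log 2 + Real.log (max |x| 1) := by
            rw [Real.log_mul (by norm_num) (by positivity)]
      _ = Real.log 2 + max (Real.log |x|) 0 := by rw [hlogmax]
    have hmx : (0:ℝ) ≤ max (Real.log |x|) 0 := le_max_right _ _
    have hb1 : -(|Real.log b|) ≤ Real.log b := neg_abs_le _
    have hc1 : Real.log C ≤ |Real.log C| := le_abs_self _
    rw [abs_le]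
    constructor
    · rw [hKdef]; linarith [abs_nonneg (Real.log C), abs_nonneg (Real.log b)]
    · rw [hKdef]; linarith [abs_nonneg (Real.log C), abs_nonneg (Real.log b)]
  -- the dominating integrable function
  have hdom : Integrable (fun ω => K + max (Real.log |X ω|) 0) μ :=
    (integrable_const K).add hlog
  -- setup subtype instances and dense countable subset
  haveI : CompactSpace Θ := isCompact_iff_compactSpace.mp hΘc
  haveI : Nonempty Θ := hne.to_subtype
  obtain ⟨D, hDc, hDd⟩ := TopologicalSpace.exists_countable_dense ↥Θ
  haveI : Countable D := hDc.to_subtype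
  set F : Θ → Ω → ℝ := fun θ ω => |Real.log (Lam θ.1 (X ω))| with hF
  -- continuity in θ for fixed ω
  have hFcont : ∀ x : ℝ, Continuous (fun θ : Θ => |Real.log (Lam θ.1 x)|) := by
    intro x
    have hval : Continuous (fun θ : Θ => (θ : ℝ × ℝ × ℝ × ℝ)) := continuous_subtype_val
    have hαc : Continuous (fun θ : Θ => (θ : ℝ × ℝ × ℝ × ℝ).1) := continuous_fst.comp hval
    have hβc : Continuous (fun θ : Θ => (θ : ℝ × ℝ × ℝ × ℝ).2.1) :=
      continuous_fst.comp (continuous_snd.comp hval)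
    have hγc : Continuous (fun θ : Θ => (θ : ℝ × ℝ × ℝ × ℝ).2.2.1) :=
      continuous_fst.comp (continuous_snd.comp (continuous_snd.comp hval))
    have hδc : Continuous (fun θ : Θ => (θ : ℝ × ℝ × ℝ × ℝ).2.2.2) :=
      continuous_snd.comp (continuous_snd.comp (continuous_snd.comp hval))
    have hdiv : Continuous (fun θ : Θ =>
        -2⁻¹ * (θ : ℝ × ℝ × ℝ × ℝ).1 / (1 - (θ : ℝ × ℝ × ℝ × ℝ).2.1)) := by
      apply Continuous.div (continuous_const.mul hαc) (continuous_const.sub hβc)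
      intro θ
      have := (hΘ θ.1 θ.2).2.1
      intro hcon
      simp only [Pi.sub_apply] at hcon
      rw [sub_eq_zero] at hcon
      exact absurd hcon.symm (ne_of_lt this)
    have hLc : Continuous (fun θ : Θ => Lam θ.1 x) := by
      apply Continuous.max hβc
      exact ((continuous_const.mul ((hγc.mul continuous_const).add
        (hδc.mul continuous_const))).mul (Real.continuous_exp.comp hdiv)).sub hβc
    apply Continuous.abs
    apply Continuous.log hLc
    intro θ
    exact ne_of_gt (lt_of_lt_of_le hb (hLamLB θ.1 θ.2 x))
  -- measurability in ω for fixed θ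
  have hFmeas : ∀ θ : Θ, Measurable (fun ω => F θ ω) := by
    intro θ
    apply Measurable.abs
    apply Real.measurable_log.comp
    apply Measurable.max measurable_const
    apply Measurable.sub _ measurable_const
    apply Measurable.mul _ measurable_const
    exact (measurable_const.mul ((measurable_const.mul hXmeas).add
      (measurable_const.mul hXmeas.abs)))
  -- the sup equals the sup over the countable dense set
  have hsup_eq : ∀ ω, (⨆ θ : Θ, F θ ω) = ⨆ d : D, F d ω := fun ω =>
    ciSup_dense_eq hDd (hFcont (X ω))
  have hmeasF : Measurable (fun ω => ⨆ θ : Θ, F θ ω) := by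
    simp_rw [hsup_eq]
    exact Measurable.iSup fun d => hFmeas d
  -- conclude by domination
  apply Integrable.mono' hdom hmeasF.aestronglyMeasurable
  filter_upwards with ω
  have hbdd : BddAbove (Set.range fun θ : Θ => F θ ω) := by
    refine ⟨K + max (Real.log |X ω|) 0, ?_⟩
    rintro _ ⟨θ, rfl⟩
    exact hkey θ.1 θ.2 (X ω)
  have hub : (⨆ θ : Θ, F θ ω) ≤ K + max (Real.log |X ω|) 0 :=
    ciSup_le fun θ => hkey θ.1 θ.2 (X ω)
  have hlb : (0:ℝ) ≤ ⨆ θ : Θ, F θ ω := by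
    obtain ⟨θ₀⟩ := (inferInstance : Nonempty Θ)
    exact le_trans (abs_nonneg _) (le_ciSup hbdd θ₀)
  rw [Real.norm_eq_abs, abs_of_nonneg hlb]
  exact hub
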